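/- Let G = ⊕_{i∈ℤ} (ℤ ⊕ ℤ), with basis vectors χ_{(v,i)} and χ_{(w,i)} for i ∈ ℤ. Define T : G → G by T(χ_{(v,i)}) = χ_{(v,i)} − χ_{(v,i+1)} − χ_{(w,i+1)} and T(χ_{(w,i)}) = χ_{(w,i)} − χ_{(v,i+1)}. Then T is injective and G/im(T) is free abelian of rank 2, generated by the images of χ_{(w,0)} and χ_{(w,1)}. -/

import Mathlib

open Finsupp Sum
noncomputable section
def M13 : (Matrix (Fin 2) (Fin 2) ℤ)ˣ :=
  ⟨!![0,1;1,-1], !![1,1;1,0], by decide, by decide⟩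
def a13 (i : ℤ) : Fin 2 → ℤ :=
  ((M13 ^ (i - 1) : (Matrix (Fin 2) (Fin 2) ℤ)ˣ) : Matrix (Fin 2) (Fin 2) ℤ) 0
lemma mul_row0 (A : Matrix (Fin 2) (Fin 2) ℤ) : ((M13 : Matrix (Fin 2) (Fin 2) ℤ) * A) 0 = A 1 := by
  funext j; simp [M13, Matrix.mul_apply, Fin.sum_univ_two]
lemma mul_row1 (A : Matrix (Fin 2) (Fin 2) ℤ) :
    ((M13 : Matrix (Fin 2) (Fin 2) ℤ) * A) 1 = A 0 - A 1 := by
  funext j; simp [M13, Matrix.mul_apply, Fin.sum_univ_two]; ring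
lemma zpow_succ13 (i : ℤ) : (M13 ^ (i + 1) : (Matrix (Fin 2) (Fin 2) ℤ)ˣ) = M13 * M13 ^ i := by
  rw [← zpow_one_add]; ring_nf
lemma a13_rec (i : ℤ) : a13 i = a13 (i + 1) + a13 (i + 2) := by
  have h1 : i + 1 - 1 = (i - 1) + 1 := by ring
  have h2 : i + 2 - 1 = ((i - 1) + 1) + 1 := by ring
  unfold a13
  rw [h1, h2]
  rw [zpow_succ13 ((i-1)+1), zpow_succ13 (i-1), Units.val_mul, Units.val_mul, Units.val_mul,
    mul_row0, mul_row0, mul_row1]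
  abel
lemma a13_one : a13 1 = ![1, 0] := by
  funext j; unfold a13; norm_num; fin_cases j <;> simp [Matrix.one_apply]
lemma a13_two : a13 2 = ![0, 1] := by
  unfold a13; norm_num [M13]; funext j; fin_cases j <;> rfl
def g13 : ℤ ⊕ ℤ → Fin 2 → ℤ := Sum.elim (fun i => a13 i) (fun i => a13 (i + 1))
def π13 : ((ℤ ⊕ ℤ) →₀ ℤ) →ₗ[ℤ] (Fin 2 → ℤ) := Finsupp.linearCombination ℤ g13
lemma π13_single (b : ℤ ⊕ ℤ) (c : ℤ) : π13 (Finsupp.single b c) = c • g13 b := by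
  simp [π13]
def σ13 : (Fin 2 → ℤ) →ₗ[ℤ] ((ℤ ⊕ ℤ) →₀ ℤ) where
  toFun x := x 0 • Finsupp.single (Sum.inr (0:ℤ)) 1 + x 1 • Finsupp.single (Sum.inr (1:ℤ)) 1
  map_add' x y := by simp [add_smul]; abel
  map_smul' c x := by simp [mul_smul]
lemma π13_σ13 (x : Fin 2 → ℤ) : π13 (σ13 x) = x := by
  have h : σ13 x = x 0 • Finsupp.single (Sum.inr (0:ℤ)) 1 + x 1 • Finsupp.single (Sum.inr (1:ℤ)) 1 := rfl
  rw [h, map_add, map_smul, map_smul, π13_single, π13_single]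
  funext j
  have e0 : g13 (Sum.inr (0:ℤ)) = a13 1 := by simp [g13]
  have e1 : g13 (Sum.inr (1:ℤ)) = a13 2 := by norm_num [g13]
  rw [e0, e1, a13_one, a13_two]
  fin_cases j <;> simp

section withT

def HTv (T : ((ℤ ⊕ ℤ) →₀ ℤ) →ₗ[ℤ] ((ℤ ⊕ ℤ) →₀ ℤ)) : Prop :=
  ∀ i : ℤ, T (Finsupp.single (Sum.inl i) 1) =
      Finsupp.single (Sum.inl i) 1 - Finsupp.single (Sum.inl (i + 1)) 1 -
        Finsupp.single (Sum.inr (i + 1)) 1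

def HTw (T : ((ℤ ⊕ ℤ) →₀ ℤ) →ₗ[ℤ] ((ℤ ⊕ ℤ) →₀ ℤ)) : Prop :=
  ∀ i : ℤ, T (Finsupp.single (Sum.inr i) 1) =
      Finsupp.single (Sum.inr i) 1 - Finsupp.single (Sum.inl (i + 1)) 1

variable {T : ((ℤ ⊕ ℤ) →₀ ℤ) →ₗ[ℤ] ((ℤ ⊕ ℤ) →₀ ℤ)}

lemma r2mem (hTw : HTw T) (i : ℤ) :
    Finsupp.single (Sum.inr i) 1 - Finsupp.single (Sum.inl (i+1)) 1 ∈ LinearMap.range T :=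
  ⟨_, hTw i⟩

lemma r3mem (hTv : HTv T) (hTw : HTw T) (i : ℤ) :
    Finsupp.single (Sum.inl i) 1 - Finsupp.single (Sum.inl (i+1)) 1 -
      Finsupp.single (Sum.inl (i+2)) 1 ∈ LinearMap.range T := by
  have h1 : Finsupp.single (Sum.inl i) 1 - Finsupp.single (Sum.inl (i+1)) 1 -
      Finsupp.single (Sum.inr (i+1)) 1 ∈ LinearMap.range T := ⟨_, hTv i⟩
  have h3 := add_mem h1 (r2mem hTw (i+1))
  have he : i + 1 + 1 = i + 2 := by ring
  rw [he] at h3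
  convert h3 using 1
  abel

def P13 (T : ((ℤ ⊕ ℤ) →₀ ℤ) →ₗ[ℤ] ((ℤ ⊕ ℤ) →₀ ℤ)) (i : ℤ) : Prop :=
  Finsupp.single (Sum.inl i) 1 - σ13 (a13 i) ∈ LinearMap.range T

lemma σ13_rec (i : ℤ) : σ13 (a13 i) = σ13 (a13 (i+1)) + σ13 (a13 (i+2)) := by
  rw [a13_rec i, map_add]

lemma stepdown (hTv : HTv T) (hTw : HTw T) (i : ℤ) (h1 : P13 T (i+1)) (h2 : P13 T (i+2)) :
    P13 T i := by
  have h3 := add_mem (add_mem h1 h2) (r3mem hTv hTw i)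
  unfold P13 at *
  convert h3 using 1
  rw [σ13_rec i]
  abel

lemma stepup (hTv : HTv T) (hTw : HTw T) (i : ℤ) (h1 : P13 T i) (h2 : P13 T (i+1)) :
    P13 T (i+2) := by
  have h3 := sub_mem (sub_mem h1 h2) (r3mem hTv hTw i)
  unfold P13 at *
  convert h3 using 1
  rw [σ13_rec i]
  abel

lemma P13_one (hTw : HTw T) : P13 T 1 := by
  unfold P13
  have h := r2mem hTw 0
  rw [show (0:ℤ)+1 = 1 from by norm_num] at h
  have h' := neg_mem h
  have hσ : σ13 (a13 1) = Finsupp.single (Sum.inr (0:ℤ)) 1 := by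
    rw [a13_one]
    have h2 : σ13 ![1,0] = (![1,0] : Fin 2 → ℤ) 0 • Finsupp.single (Sum.inr (0:ℤ)) 1 +
        (![1,0] : Fin 2 → ℤ) 1 • Finsupp.single (Sum.inr (1:ℤ)) 1 := rfl
    rw [h2]
    norm_num
  rw [hσ]
  convert h' using 1
  abel

lemma P13_two (hTw : HTw T) : P13 T 2 := by
  unfold P13
  have h := r2mem hTw 1
  rw [show (1:ℤ)+1 = 2 from by norm_num] at h
  have h' := neg_mem h
  have hσ : σ13 (a13 2) = Finsupp.single (Sum.inr (1:ℤ)) 1 := by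
    rw [a13_two]
    have h2 : σ13 ![0,1] = (![0,1] : Fin 2 → ℤ) 0 • Finsupp.single (Sum.inr (0:ℤ)) 1 +
        (![0,1] : Fin 2 → ℤ) 1 • Finsupp.single (Sum.inr (1:ℤ)) 1 := rfl
    rw [h2]
    norm_num
  rw [hσ]
  convert h' using 1
  abel

lemma P13_all (hTv : HTv T) (hTw : HTw T) (i : ℤ) : P13 T i := by
  have key : ∀ i : ℤ, P13 T i ∧ P13 T (i+1) := by
    intro i
    induction i using Int.induction_on with
    | zero =>
      have h1 := P13_one hTw
      have h2 := P13_two hTw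
      have h1' : P13 T (0+1) := by norm_num; exact h1
      have h2' : P13 T (0+2) := by norm_num; exact h2
      exact ⟨stepdown hTv hTw 0 h1' h2', by norm_num; exact h1⟩
    | succ n ih =>
      refine ⟨ih.2, ?_⟩
      have h := stepup hTv hTw n ih.1 ih.2
      have he : ((n:ℤ)+2) = ((n:ℤ)+1+1) := by ring
      rwa [he] at h
    | pred n ih =>
      have hd : P13 T (-(n:ℤ)-1) := by
        apply stepdown hTv hTw (-(n:ℤ)-1)
        · have he : (-(n:ℤ)-1+1) = -(n:ℤ) := by ring
          rw [he]; exact ih.1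
        · have he : (-(n:ℤ)-1+2) = -(n:ℤ)+1 := by ring
          rw [he]; exact ih.2
      refine ⟨hd, ?_⟩
      have he : (-(n:ℤ)-1+1) = -(n:ℤ) := by ring
      rw [he]; exact ih.1
  exact (key i).1

lemma single_sub_mem (hTv : HTv T) (hTw : HTw T) (b : ℤ ⊕ ℤ) :
    Finsupp.single b 1 - σ13 (π13 (Finsupp.single b 1)) ∈ LinearMap.range T := by
  rw [π13_single, one_smul]
  cases b with
  | inl i => exact P13_all hTv hTw i
  | inr i =>
    have h3 := add_mem (r2mem hTw i) (P13_all hTv hTw (i+1))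
    show Finsupp.single (Sum.inr i) 1 - σ13 (a13 (i+1)) ∈ _
    convert h3 using 1
    abel

lemma sub_mem_range (hTv : HTv T) (hTw : HTw T) (x : (ℤ ⊕ ℤ) →₀ ℤ) :
    x - σ13 (π13 x) ∈ LinearMap.range T := by
  have h : (LinearMap.range T).mkQ.comp (LinearMap.id - σ13 ∘ₗ π13) = 0 := by
    apply Finsupp.lhom_ext
    intro b c
    have hc : (Finsupp.single b c : (ℤ ⊕ ℤ) →₀ ℤ) = c • Finsupp.single b 1 := by
      rw [Finsupp.smul_single, smul_eq_mul, mul_one]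
    have hmem : Finsupp.single b c - σ13 (π13 (Finsupp.single b c)) ∈ LinearMap.range T := by
      rw [hc, map_smul, map_smul, ← smul_sub]
      exact Submodule.smul_mem _ c (single_sub_mem hTv hTw b)
    simp only [LinearMap.comp_apply, LinearMap.sub_apply, LinearMap.id_apply,
      LinearMap.coe_comp, Function.comp_apply, LinearMap.zero_apply, Submodule.mkQ_apply]
    rw [Submodule.Quotient.mk_eq_zero]
    exact hmem
  have h2 := LinearMap.congr_fun h x
  simp only [LinearMap.comp_apply, LinearMap.sub_apply, LinearMap.id_apply,
    LinearMap.coe_comp, Function.comp_apply, LinearMap.zero_apply] at h2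
  rwa [Submodule.mkQ_apply, Submodule.Quotient.mk_eq_zero] at h2

lemma range_le_ker (hTv : HTv T) (hTw : HTw T) : LinearMap.range T ≤ LinearMap.ker π13 := by
  have h : π13 ∘ₗ T = 0 := by
    apply Finsupp.lhom_ext
    intro b c
    have hc : (Finsupp.single b c : (ℤ ⊕ ℤ) →₀ ℤ) = c • Finsupp.single b 1 := by
      rw [Finsupp.smul_single, smul_eq_mul, mul_one]
    rw [hc]
    simp only [LinearMap.comp_apply, map_smul, LinearMap.zero_apply]
    have hz : π13 (T (Finsupp.single b 1)) = 0 := by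
      cases b with
      | inl i =>
        rw [hTv i, map_sub, map_sub, π13_single, π13_single, π13_single]
        simp only [one_smul, g13, Sum.elim_inl, Sum.elim_inr]
        rw [a13_rec i]
        have he : i + 1 + 1 = i + 2 := by ring
        rw [he]
        abel
      | inr i =>
        rw [hTw i, map_sub, π13_single, π13_single]
        simp only [one_smul, g13, Sum.elim_inl, Sum.elim_inr]
        abel
    rw [hz, smul_zero]
  rintro y ⟨x, rfl⟩
  rw [LinearMap.mem_ker]
  exact LinearMap.congr_fun h x



lemma Tapply (x : (ℤ ⊕ ℤ) →₀ ℤ) (p : ℤ ⊕ ℤ) :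
    T x p = ∑ b ∈ x.support, x b * (T (Finsupp.single b 1)) p := by
  have h1 : T x = ∑ b ∈ x.support, x b • T (Finsupp.single b 1) := by
    conv_lhs => rw [← Finsupp.sum_single x, Finsupp.sum]
    rw [map_sum]
    apply Finset.sum_congr rfl
    intro b _
    rw [← Finsupp.smul_single_one, map_smul]
  rw [h1, Finsupp.finset_sum_apply]
  apply Finset.sum_congr rfl
  intro b _
  rw [Finsupp.smul_apply, smul_eq_mul]

lemma Tinj (hTv : HTv T) (hTw : HTw T) : Function.Injective T := by
  have hker : ∀ x : (ℤ ⊕ ℤ) →₀ ℤ, T x = 0 → x = 0 := by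
    intro x hx
    by_contra hne
    have hsupp : x.support.Nonempty := Finsupp.support_nonempty_iff.mpr hne
    have hDne : (x.support.image (Sum.elim id id : ℤ ⊕ ℤ → ℤ)).Nonempty := hsupp.image _
    set m := (x.support.image (Sum.elim id id : ℤ ⊕ ℤ → ℤ)).max' hDne with hm
    have hle : ∀ b ∈ x.support, Sum.elim id id b ≤ m := fun b hb =>
      Finset.le_max' _ _ (Finset.mem_image_of_mem _ hb)
    have heval : ∀ p, ∑ b ∈ x.support, x b * (T (Finsupp.single b 1)) p = 0 := by
      intro p
      rw [← Tapply, hx]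
      rfl
    -- x (inl m) = 0
    have hA : x (Sum.inl m) = 0 := by
      have h0 := heval (Sum.inr (m+1))
      have hcongr : ∑ b ∈ x.support, x b * (T (Finsupp.single b 1)) (Sum.inr (m+1)) =
          ∑ b ∈ x.support, (if b = Sum.inl m then -(x b) else 0) := by
        apply Finset.sum_congr rfl
        intro b hb
        have hbm := hle b hb
        cases b with
        | inl i =>
          rw [hTv i]
          simp only [Finsupp.sub_apply, Finsupp.single_apply]
          simp only [Sum.elim_inl, id] at hbm
          have h1 : (Sum.inl i : ℤ ⊕ ℤ) ≠ Sum.inr (m+1) := by simp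
          have h2 : (Sum.inl (i+1) : ℤ ⊕ ℤ) ≠ Sum.inr (m+1) := by simp
          rw [if_neg h1, if_neg h2]
          by_cases h : i = m
          · subst h
            rw [if_pos rfl, if_pos rfl]
            ring
          · have h3 : (Sum.inr (i+1) : ℤ ⊕ ℤ) ≠ Sum.inr (m+1) := by
              simp; omega
            have h4 : (Sum.inl i : ℤ ⊕ ℤ) ≠ Sum.inl m := by simp [h]
            rw [if_neg h3, if_neg h4]
            ring
        | inr i =>
          rw [hTw i]
          simp only [Finsupp.sub_apply, Finsupp.single_apply]
          simp only [Sum.elim_inr, id] at hbm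
          have h1 : (Sum.inr i : ℤ ⊕ ℤ) ≠ Sum.inr (m+1) := by simp; omega
          have h2 : (Sum.inl (i+1) : ℤ ⊕ ℤ) ≠ Sum.inr (m+1) := by simp
          have h3 : (Sum.inr i : ℤ ⊕ ℤ) ≠ Sum.inl m := by simp
          rw [if_neg h1, if_neg h2, if_neg h3]
          ring
      rw [hcongr, Finset.sum_ite_eq' x.support (Sum.inl m) (fun b => -(x b))] at h0
      by_cases hmem : Sum.inl m ∈ x.support
      · rw [if_pos hmem] at h0; linarith
      · exact Finsupp.notMem_support_iff.mp hmem
    have hB : x (Sum.inr m) = 0 := by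
      have h0 := heval (Sum.inl (m+1))
      have hcongr : ∑ b ∈ x.support, x b * (T (Finsupp.single b 1)) (Sum.inl (m+1)) =
          ∑ b ∈ x.support, ((if b = Sum.inl m then -(x b) else 0) +
            (if b = Sum.inr m then -(x b) else 0)) := by
        apply Finset.sum_congr rfl
        intro b hb
        have hbm := hle b hb
        cases b with
        | inl i =>
          rw [hTv i]
          simp only [Finsupp.sub_apply, Finsupp.single_apply]
          simp only [Sum.elim_inl, id] at hbm
          have h1 : (Sum.inl i : ℤ ⊕ ℤ) ≠ Sum.inl (m+1) := by simp; omega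
          have h2 : (Sum.inr (i+1) : ℤ ⊕ ℤ) ≠ Sum.inl (m+1) := by simp
          have h3 : (Sum.inl i : ℤ ⊕ ℤ) ≠ Sum.inr m := by simp
          rw [if_neg h1, if_neg h2, if_neg h3]
          by_cases h : i = m
          · subst h
            rw [if_pos rfl, if_pos rfl]
            ring
          · have h4 : (Sum.inl (i+1) : ℤ ⊕ ℤ) ≠ Sum.inl (m+1) := by simp; omega
            have h5 : (Sum.inl i : ℤ ⊕ ℤ) ≠ Sum.inl m := by simp [h]
            rw [if_neg h4, if_neg h5]
            ring
        | inr i =>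
          rw [hTw i]
          simp only [Finsupp.sub_apply, Finsupp.single_apply]
          simp only [Sum.elim_inr, id] at hbm
          have h1 : (Sum.inr i : ℤ ⊕ ℤ) ≠ Sum.inl (m+1) := by simp
          have h3 : (Sum.inr i : ℤ ⊕ ℤ) ≠ Sum.inl m := by simp
          rw [if_neg h1, if_neg h3]
          by_cases h : i = m
          · subst h
            rw [if_pos rfl, if_pos rfl]
            ring
          · have h4 : (Sum.inl (i+1) : ℤ ⊕ ℤ) ≠ Sum.inl (m+1) := by simp; omega
            have h5 : (Sum.inr i : ℤ ⊕ ℤ) ≠ Sum.inr m := by simp [h]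
            rw [if_neg h4, if_neg h5]
            ring
      rw [hcongr, Finset.sum_add_distrib,
        Finset.sum_ite_eq' x.support (Sum.inl m) (fun b => -(x b)),
        Finset.sum_ite_eq' x.support (Sum.inr m) (fun b => -(x b))] at h0
      by_cases hmem : Sum.inr m ∈ x.support
      · rw [if_pos hmem] at h0
        by_cases hml : Sum.inl m ∈ x.support
        · rw [if_pos hml] at h0
          rw [hA] at h0
          linarith
        · rw [if_neg hml] at h0
          linarith
      · exact Finsupp.notMem_support_iff.mp hmem
    obtain ⟨b, hb, hbm⟩ := Finset.mem_image.mp (Finset.max'_mem _ hDne)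
    cases b with
    | inl i =>
      simp only [Sum.elim_inl, id] at hbm
      rw [← hm] at hbm
      subst hbm
      exact Finsupp.mem_support_iff.mp hb hA
    | inr i =>
      simp only [Sum.elim_inr, id] at hbm
      rw [← hm] at hbm
      subst hbm
      exact Finsupp.mem_support_iff.mp hb hB
  intro a b hab
  have := hker (a - b) (by rw [map_sub, hab, sub_self])
  exact sub_eq_zero.mp this
end withT
end

/-- `Sum.inl i` plays the role of the basis vector `χ_{(v,i)}` and `Sum.inr i` that of
`χ_{(w,i)}`. -/
theorem stmt13 (T : ((ℤ ⊕ ℤ) →₀ ℤ) →ₗ[ℤ] ((ℤ ⊕ ℤ) →₀ ℤ))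
    (hTv : ∀ i : ℤ, T (Finsupp.single (Sum.inl i) 1) =
      Finsupp.single (Sum.inl i) 1 - Finsupp.single (Sum.inl (i + 1)) 1 -
        Finsupp.single (Sum.inr (i + 1)) 1)
    (hTw : ∀ i : ℤ, T (Finsupp.single (Sum.inr i) 1) =
      Finsupp.single (Sum.inr i) 1 - Finsupp.single (Sum.inl (i + 1)) 1) :
    Function.Injective T ∧
    ∃ e : (((ℤ ⊕ ℤ) →₀ ℤ) ⧸ LinearMap.range T) ≃ₗ[ℤ] (Fin 2 → ℤ),
      e (Submodule.Quotient.mk (Finsupp.single (Sum.inr 0) 1)) = ![1, 0] ∧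
      e (Submodule.Quotient.mk (Finsupp.single (Sum.inr 1) 1)) = ![0, 1] := by
  have hTv' : HTv T := hTv
  have hTw' : HTw T := hTw
  constructor
  · exact Tinj hTv' hTw'
  · set Q := LinearMap.range T with hQ
    have hker : Q ≤ LinearMap.ker π13 := range_le_ker hTv' hTw'
    set π' := Q.liftQ π13 hker with hπ'
    set σ' := Q.mkQ ∘ₗ σ13 with hσ'
    have h1 : π'.comp σ' = LinearMap.id := by
      apply LinearMap.ext
      intro x
      show π' (Q.mkQ (σ13 x)) = x
      rw [Submodule.mkQ_apply, Submodule.liftQ_apply, π13_σ13]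
    have h2 : σ'.comp π' = LinearMap.id := by
      apply Submodule.linearMap_qext
      apply LinearMap.ext
      intro x
      show Q.mkQ (σ13 (π' (Q.mkQ x))) = Q.mkQ x
      simp only [Submodule.mkQ_apply, Submodule.liftQ_apply]
      rw [Submodule.Quotient.eq]
      have h := neg_mem (sub_mem_range hTv' hTw' x)
      rwa [neg_sub] at h
    refine ⟨LinearEquiv.ofLinear π' σ' h1 h2, ?_, ?_⟩
    · rw [LinearEquiv.ofLinear_apply, Submodule.liftQ_apply, π13_single, one_smul]
      show g13 (Sum.inr 0) = ![1, 0]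
      have : g13 (Sum.inr (0:ℤ)) = a13 (0+1) := rfl
      rw [this, zero_add, a13_one]
    · rw [LinearEquiv.ofLinear_apply, Submodule.liftQ_apply, π13_single, one_smul]
      show g13 (Sum.inr 1) = ![0, 1]
      have : g13 (Sum.inr (1:ℤ)) = a13 (1+1) := rfl
      rw [this]
      norm_num
      exact a13_two
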